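/- Let X ⊆ ℝⁿ be nonempty, closed, convex, and let F : ℝⁿ → ℝⁿ be monotone. Suppose x* solves VI(X,F), the weak sharpness condition holds with constant α > 0 (i.e., for all x ∈ X, F(x*)ᵀ(x − x*) ≥ α·dist(x, X*)), and ‖F(x*)‖ ≤ C. Then for all x ∈ ℝⁿ: F(x)ᵀ(x − x*) ≥ α·dist(Π_X(x), X*) − C·dist(x, X). -/

import Mathlib

theorem stmt_2 {n : ℕ} (X : Set (EuclideanSpace ℝ (Fin n)))
    (F : EuclideanSpace ℝ (Fin n) → EuclideanSpace ℝ (Fin n))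
    (hXne : X.Nonempty) (hXcl : IsClosed X) (hXcv : Convex ℝ X)
    (hmono : ∀ x y, 0 ≤ (inner ℝ (F x - F y) ( x - y) : ℝ))
    (Xstar : Set (EuclideanSpace ℝ (Fin n)))
    (hXstar : Xstar = {z | z ∈ X ∧ ∀ y ∈ X, 0 ≤ (inner ℝ (F z) ( y - z) : ℝ)})
    (P : EuclideanSpace ℝ (Fin n) → EuclideanSpace ℝ (Fin n))
    (hP : ∀ z, P z ∈ X ∧ ∀ w ∈ X, ‖z - P z‖ ≤ ‖z - w‖)
    (xs : EuclideanSpace ℝ (Fin n)) (hxs : xs ∈ Xstar)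
    (α : ℝ) (hα : 0 < α)
    (hws : ∀ x ∈ X, α * Metric.infDist x Xstar ≤ (inner ℝ (F xs) ( x - xs) : ℝ))
    (C : ℝ) (hC : ‖F xs‖ ≤ C) :
    ∀ x, α * Metric.infDist (P x) Xstar - C * Metric.infDist x X ≤ (inner ℝ (F x) ( x - xs) : ℝ) := by
  intro x
  obtain ⟨hPX, hPmin⟩ := hP x
  -- monotonicity: ⟪F x, x - xs⟫ ≥ ⟪F xs, x - xs⟫
  have hmon := hmono x xs
  rw [inner_sub_left] at hmon
  -- ‖x - P x‖ ≤ infDist x X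
  have hle : ‖x - P x‖ ≤ Metric.infDist x X := by
    rw [Metric.infDist_eq_iInf]
    haveI : Nonempty X := hXne.to_subtype
    apply le_ciInf
    intro w
    simpa [dist_eq_norm] using hPmin w w.2
  have hC0 : (0:ℝ) ≤ C := le_trans (norm_nonneg _) hC
  -- split
  have hsplit : (inner ℝ (F xs) (x - xs) : ℝ) =
      inner ℝ (F xs) (P x - xs) + inner ℝ (F xs) (x - P x) := by
    rw [← inner_add_right]
    congr 1
    abel
  have h1 := hws (P x) hPX
  have h2 : -(C * Metric.infDist x X) ≤ (inner ℝ (F xs) (x - P x) : ℝ) := by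
    have := abs_real_inner_le_norm (F xs) (x - P x)
    have h3 : ‖F xs‖ * ‖x - P x‖ ≤ C * Metric.infDist x X :=
      mul_le_mul hC hle (norm_nonneg _) hC0
    nlinarith [neg_abs_le (inner ℝ (F xs) (x - P x) : ℝ)]
  have : α * Metric.infDist (P x) Xstar - C * Metric.infDist x X ≤
      (inner ℝ (F xs) (x - xs) : ℝ) := by
    rw [hsplit]; linarith
  linarith
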